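/- Monotonicity of the supremum chain (Proposition 6.1): for every event a ∈ E and all x, y ∈ X with x ≤ y in the componentwise order, f̄(x, a) ≤ f̄(y, a). -/

import Mathlib

open MeasureTheory Finset ENNReal

namespace ATO

/-- Events: joint arrivals `d A` for subsets `A`, and joint-return services `s i j = r_j^i`. -/
inductive Ev (I : ℕ) where
  | d : Finset (Fin I) → Ev I
  | s : Fin I → ℕ → Ev I

instance (I : ℕ) : MeasurableSpace (Ev I) := ⊤

/-- Valid events: arrivals for nonempty `A`, services `r_j^i` with `1 ≤ j ≤ C i`. -/
def ValidEv {I : ℕ} (C : Fin I → ℕ) : Ev I → Prop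
  | .d A => A.Nonempty
  | .s i j => 1 ≤ j ∧ j ≤ C i

/-- The detailed state space `N`: coordinates indexed by the nonempty subsets `A`
(the `∅` coordinate is forced to `0`), with `∑_{A ∋ i} n_A ≤ C_i` for every `i`. -/
def Nspace {I : ℕ} (C : Fin I → ℕ) : Set (Finset (Fin I) → ℕ) :=
  {n | n ∅ = 0 ∧ ∀ i, (∑ A ∈ Finset.univ.filter (fun A => i ∈ A), n A) ≤ C i}

/-- The projection `ψ : N → X`, `ψ(n)_i = ∑_{A ∋ i} n_A`. -/
def psi {I : ℕ} (n : Finset (Fin I) → ℕ) : Fin I → ℕ :=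
  fun i => ∑ A ∈ Finset.univ.filter (fun A => i ∈ A), n A

/-- The projected state space `X = {0,…,C 1} × ⋯ × {0,…,C I}`. -/
def Xspace {I : ℕ} (C : Fin I → ℕ) : Set (Fin I → ℕ) := {x | ∀ i, x i ≤ C i}

/-- The enumeration `A_k^i` of the subsets of `{i,…,I}` containing `i` (0-based indices):
an element `t > i` belongs to `A_k^i` iff the binary digit of `k` in position `I - 1 - t`
vanishes. -/
def Aset {I : ℕ} (i : Fin I) (k : ℕ) : Finset (Fin I) :=
  Finset.univ.filter (fun t => t = i ∨ (i < t ∧ Nat.testBit k (I - 1 - t.val) = false))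

/-- Partial sums `∑_{ℓ=0}^{k-1} n_{A_ℓ^i}`. -/
def psum {I : ℕ} (i : Fin I) (n : Finset (Fin I) → ℕ) (k : ℕ) : ℕ :=
  ∑ l ∈ Finset.range k, n (Aset i l)

/-- The transition function `f̃` of the detailed chain: a demand `d A` adds `ε_{A^{(n)}}`
where `A^{(n)} = {i ∈ A : ψ(n)_i < C_i}` (no change if `A^{(n)} = ∅`); a service `r_j^i`
removes `ε_{A_k^i}` for the minimal `k` with `∑_{ℓ=0}^{k} n_{A_ℓ^i} ≥ j`, if
`∑_{ℓ} n_{A_ℓ^i} ≥ j`, and otherwise does nothing. -/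
noncomputable def ftil {I : ℕ} (C : Fin I → ℕ) (n : Finset (Fin I) → ℕ) :
    Ev I → (Finset (Fin I) → ℕ)
  | .d A => fun B =>
      n B + if B = A.filter (fun i => psi n i < C i) ∧ B.Nonempty then 1 else 0
  | .s i j => fun B =>
      n B - if j ≤ psum i n (2 ^ (I - 1 - i.val))
              ∧ B = Aset i (sInf {k | j ≤ psum i n (k + 1)}) then 1 else 0

/-- The supremum chain `f̄` on `X` (componentwise supremum over all detailed states
projecting to `x`). -/
noncomputable def fbar {I : ℕ} (C : Fin I → ℕ) (x : Fin I → ℕ) (a : Ev I) : Fin I → ℕ :=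
  fun p => sSup ((fun n => psi (ftil C n a) p) '' {n | n ∈ Nspace C ∧ psi n = x})

/-- The infimum chain `f_inf` on `X` (componentwise infimum over all detailed states
projecting to `x`). -/
noncomputable def finf {I : ℕ} (C : Fin I → ℕ) (x : Fin I → ℕ) (a : Ev I) : Fin I → ℕ :=
  fun p => sInf ((fun n => psi (ftil C n a) p) '' {n | n ∈ Nspace C ∧ psi n = x})

/-- One step of the aggregated envelope chain `F([m,M],a)`. -/
noncomputable def Fenv {I : ℕ} (C : Fin I → ℕ) (m M : Fin I → ℕ) (a : Ev I) :
    (Fin I → ℕ) × (Fin I → ℕ) :=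
  (fun p => sInf ((fun x => finf C x a p) '' Set.Icc m M),
   fun p => sSup ((fun x => fbar C x a p) '' Set.Icc m M))

/-- Iteration of the aggregated envelope chain along a word (head applied first). -/
noncomputable def FenvIter {I : ℕ} (C : Fin I → ℕ) :
    (Fin I → ℕ) → (Fin I → ℕ) → List (Ev I) → (Fin I → ℕ) × (Fin I → ℕ)
  | m, M, [] => (m, M)
  | m, M, a :: w => FenvIter C (Fenv C m M a).1 (Fenv C m M a).2 w

/-- Iterated application of a transition function along a word (head applied first). -/
def iter {I : ℕ} {σ : Type*} (f : σ → Ev I → σ) : σ → List (Ev I) → σ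
  | x, [] => x
  | x, a :: w => iter f (f x a) w

/-- The backward word `u_t u_{t-1} ⋯ u_1` (with `u_t` applied first). -/
def bword {I : ℕ} (ω : ℕ → Ev I) (t : ℕ) : List (Ev I) :=
  ((List.range t).reverse).map fun s => ω (s + 1)

/-- The forward word `u_1 u_2 ⋯ u_t` (with `u_1` applied first). -/
def fword {I : ℕ} (ω : ℕ → Ev I) (t : ℕ) : List (Ev I) :=
  (List.range t).map fun s => ω (s + 1)

/-- The "hat" operation `x̂_i = max{x_i − (x_1 + ⋯ + x_{i-1}), 0}`. -/
def xhat {I : ℕ} (x : Fin I → ℕ) (i : Fin I) : ℕ :=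
  x i - ∑ t ∈ Finset.univ.filter (fun t => t < i), x t

/-- The distribution `ν` on events: `ν (d A) = λ_A / Λ` and `ν (r_j^i) = μ / Λ`. -/
noncomputable def probJ {I : ℕ} (C : Fin I → ℕ) (lam : Finset (Fin I) → ℝ) (μv Λ : ℝ) :
    Ev I → ℝ≥0∞
  | .d A => if A.Nonempty then ENNReal.ofReal (lam A / Λ) else 0
  | .s i j => if 1 ≤ j ∧ j ≤ C i then ENNReal.ofReal (μv / Λ) else 0



lemma sum_range_two_pow (k : ℕ) : ∑ p ∈ Finset.range k, 2 ^ p = 2 ^ k - 1 := by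
  induction k with
  | zero => simp
  | succ k ih =>
    rw [Finset.sum_range_succ, ih, pow_succ]
    have : 1 ≤ 2 ^ k := Nat.one_le_two_pow
    omega

lemma sum_two_pow_lt {S : Finset ℕ} {e : ℕ} (h : S ⊆ Finset.range e) :
    ∑ p ∈ S, 2 ^ p < 2 ^ e := by
  calc ∑ p ∈ S, 2 ^ p ≤ ∑ p ∈ Finset.range e, 2 ^ p :=
        Finset.sum_le_sum_of_subset h
    _ = 2 ^ e - 1 := sum_range_two_pow e
    _ < 2 ^ e := by have : 1 ≤ 2 ^ e := Nat.one_le_two_pow; omega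

lemma testBit_sum_two_pow (S : Finset ℕ) (b : ℕ) :
    (∑ p ∈ S, 2 ^ p).testBit b = decide (b ∈ S) := by
  induction S using Finset.induction_on_max generalizing b with
  | empty => simp
  | insert a s hs ih =>
    have has : a ∉ s := fun h => lt_irrefl a (hs a h)
    rw [Finset.sum_insert has]
    have hm : ∑ p ∈ s, 2 ^ p < 2 ^ a :=
      sum_two_pow_lt (fun p hp => Finset.mem_range.2 (hs p hp))
    rcases lt_trichotomy b a with hb | rfl | hb
    · rw [Nat.testBit_two_pow_add_gt hb, ih]
      have : b ≠ a := Nat.ne_of_lt hb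
      simp [Finset.mem_insert, this]
    · rw [Nat.testBit_two_pow_add_eq]
      have h2 : Nat.testBit (∑ p ∈ s, 2 ^ p) b = false := by
        rw [ih]; simp [has]
      simp [h2]
    · have hlt : 2 ^ a + ∑ p ∈ s, 2 ^ p < 2 ^ b := by
        have h1 : 2 ^ (a + 1) ≤ 2 ^ b := Nat.pow_le_pow_right (by norm_num) hb
        have h2 : 2 ^ (a + 1) = 2 ^ a + 2 ^ a := by rw [pow_succ]; omega
        omega
      rw [Nat.testBit_lt_two_pow hlt]
      have : b ∉ insert a s := by
        simp only [Finset.mem_insert]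
        rintro (rfl | h)
        · exact lt_irrefl b hb
        · exact absurd (hs b h) (by omega)
      simp [this]

section Aux
variable {I : ℕ}

lemma mem_Aset {i t : Fin I} {k : ℕ} :
    t ∈ Aset i k ↔ t = i ∨ (i < t ∧ Nat.testBit k (I - 1 - t.val) = false) := by
  simp [Aset]

lemma i_mem_Aset (i : Fin I) (k : ℕ) : i ∈ Aset i k := mem_Aset.2 (Or.inl rfl)

lemma Aset_topk (i : Fin I) : Aset i (2 ^ (I - 1 - i.val) - 1) = {i} := by
  ext t
  rw [mem_Aset, Finset.mem_singleton]
  constructor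
  · rintro (rfl | ⟨hit, hbit⟩)
    · rfl
    · exfalso
      rw [Nat.testBit_two_pow_sub_one] at hbit
      have ht : t.val < I := t.isLt
      have : I - 1 - t.val < I - 1 - i.val := by
        have := hit
        rw [Fin.lt_def] at this
        omega
      simp [this] at hbit
  · rintro rfl; exact Or.inl rfl

lemma Aset_eq_singleton {i : Fin I} {l : ℕ} (hl : l < 2 ^ (I - 1 - i.val))
    (h : Aset i l = {i}) : l = 2 ^ (I - 1 - i.val) - 1 := by
  apply Nat.eq_of_testBit_eq
  intro b
  rw [Nat.testBit_two_pow_sub_one]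
  by_cases hb : b < I - 1 - i.val
  · have hi : i.val < I := i.isLt
    have hIb : I - 1 - b < I := by omega
    set t : Fin I := ⟨I - 1 - b, hIb⟩ with ht
    have hit : i < t := by rw [Fin.lt_def]; simp [ht]; omega
    have htne : t ≠ i := Fin.ne_of_gt hit
    have htmem : t ∉ Aset i l := by rw [h, Finset.mem_singleton]; exact htne
    rw [mem_Aset] at htmem
    push_neg at htmem
    have hbit := htmem.2 hit
    have hval : I - 1 - t.val = b := by simp [ht]; omega
    rw [hval] at hbit
    simp [hb]
    simpa using hbit
  · have hfl : Nat.testBit l b = false :=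
      Nat.testBit_lt_two_pow (lt_of_lt_of_le hl (Nat.pow_le_pow_right (by norm_num) (by omega)))
    simp [hfl, hb]

end Aux
section Aux2
variable {I : ℕ}

lemma sum_ite_eq_mem (p : Fin I) (D : Finset (Fin I)) (c : ℕ) :
    ∑ B ∈ Finset.univ.filter (fun B => p ∈ B), (if B = D then c else 0)
      = if p ∈ D then c else 0 := by
  rw [Finset.sum_ite_eq' (Finset.univ.filter (fun B => p ∈ B)) D (fun _ => c)]
  simp

lemma psi_ftil_d (C : Fin I → ℕ) (n : Finset (Fin I) → ℕ) (A : Finset (Fin I)) (p : Fin I) :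
    psi (ftil C n (.d A)) p = psi n p + (if p ∈ A ∧ psi n p < C p then 1 else 0) := by
  have h1 : psi (ftil C n (.d A)) p = psi n p +
      ∑ B ∈ Finset.univ.filter (fun B => p ∈ B),
        (if B = A.filter (fun i => psi n i < C i) ∧ B.Nonempty then 1 else 0) := by
    simp only [psi, ftil, Finset.sum_add_distrib]
  rw [h1]
  congr 1
  have h2 : ∀ B : Finset (Fin I),
      (if B = A.filter (fun i => psi n i < C i) ∧ B.Nonempty then (1 : ℕ) else 0)
      = if B = A.filter (fun i => psi n i < C i) then
          (if (A.filter (fun i => psi n i < C i)).Nonempty then 1 else 0) else 0 := by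
    intro B
    by_cases h : B = A.filter (fun i => psi n i < C i)
    · subst h; simp
    · simp [h]
  simp_rw [h2]
  rw [sum_ite_eq_mem]
  by_cases hpA : p ∈ A.filter (fun i => psi n i < C i)
  · have hne : (A.filter (fun i => psi n i < C i)).Nonempty := ⟨p, hpA⟩
    rw [Finset.mem_filter] at hpA
    simp [hne, hpA.1, hpA.2, Finset.mem_filter]
  · have h3 : ¬ (p ∈ A ∧ psi n p < C p) := by
      rw [Finset.mem_filter] at hpA; tauto
    simp [hpA, h3]

/-- The singleton-supported detailed state. -/
def sing (x : Fin I → ℕ) : Finset (Fin I) → ℕ := fun A => ∑ t, if A = {t} then x t else 0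

lemma psi_sing (x : Fin I → ℕ) : psi (sing x) = x := by
  funext p
  simp only [psi, sing]
  rw [Finset.sum_comm]
  have h : ∀ t : Fin I, ∑ B ∈ Finset.univ.filter (fun B => p ∈ B),
      (if B = ({t} : Finset (Fin I)) then x t else 0) = if p ∈ ({t} : Finset (Fin I)) then x t else 0 :=
    fun t => sum_ite_eq_mem p {t} (x t)
  simp_rw [h, Finset.mem_singleton]
  rw [Finset.sum_ite_eq Finset.univ p x]
  simp

lemma sing_mem {C : Fin I → ℕ} {x : Fin I → ℕ} (hx : x ∈ Xspace C) : sing x ∈ Nspace C := by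
  constructor
  · simp [sing, fun t : Fin I => (Finset.singleton_ne_empty t).symm]
  · intro t
    have h : psi (sing x) t = x t := congrFun (psi_sing x) t
    calc (∑ A ∈ Finset.univ.filter (fun A => t ∈ A), sing x A) = x t := h
      _ ≤ C t := hx t

end Aux2
section Aux3
variable {I : ℕ}

lemma key_pos {n : Finset (Fin I) → ℕ} {i : Fin I} {j : ℕ} (hj : 1 ≤ j)
    (hc : j ≤ psum i n (2 ^ (I - 1 - i.val))) :
    1 ≤ n (Aset i (sInf {k | j ≤ psum i n (k + 1)})) := by
  have hpow : 1 ≤ 2 ^ (I - 1 - i.val) := Nat.one_le_two_pow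
  have hT : 2 ^ (I - 1 - i.val) - 1 ∈ {k | j ≤ psum i n (k + 1)} := by
    show j ≤ psum i n (2 ^ (I - 1 - i.val) - 1 + 1)
    rw [Nat.sub_add_cancel hpow]; exact hc
  set k0 := sInf {k | j ≤ psum i n (k + 1)} with hk0
  have hk0mem : k0 ∈ {k | j ≤ psum i n (k + 1)} := Nat.sInf_mem ⟨_, hT⟩
  have hsucc : psum i n (k0 + 1) = psum i n k0 + n (Aset i k0) := Finset.sum_range_succ _ _
  rcases Nat.eq_zero_or_pos k0 with h0 | h0
  · have : psum i n k0 = 0 := by rw [h0]; simp [psum]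
    have := hk0mem
    simp only [Set.mem_setOf_eq] at this
    omega
  · have hlt : k0 - 1 ∉ {k | j ≤ psum i n (k + 1)} :=
      Nat.notMem_of_lt_sInf (by omega)
    simp only [Set.mem_setOf_eq, not_le] at hlt
    have hkk : k0 - 1 + 1 = k0 := by omega
    rw [hkk] at hlt
    have := hk0mem
    simp only [Set.mem_setOf_eq] at this
    omega

lemma psi_ftil_s (C : Fin I → ℕ) (n : Finset (Fin I) → ℕ) (i : Fin I) {j : ℕ}
    (hj : 1 ≤ j) (p : Fin I) :
    psi (ftil C n (.s i j)) p = psi n p -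
      (if j ≤ psum i n (2 ^ (I - 1 - i.val))
          ∧ p ∈ Aset i (sInf {k | j ≤ psum i n (k + 1)}) then 1 else 0) := by
  set K := Aset i (sInf {k | j ≤ psum i n (k + 1)}) with hK
  have h1 : psi (ftil C n (.s i j)) p
      = (∑ B ∈ Finset.univ.filter (fun B => p ∈ B), n B)
        - ∑ B ∈ Finset.univ.filter (fun B => p ∈ B),
            (if j ≤ psum i n (2 ^ (I - 1 - i.val)) ∧ B = K then 1 else 0) := by
    simp only [psi, ftil, ← hK]
    rw [Finset.sum_tsub_distrib]
    intro B hB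
    split_ifs with h
    · rw [h.2]; exact key_pos hj h.1
    · exact Nat.zero_le _
  rw [h1]
  congr 1
  have h2 : ∀ B : Finset (Fin I),
      (if j ≤ psum i n (2 ^ (I - 1 - i.val)) ∧ B = K then (1 : ℕ) else 0)
      = if B = K then (if j ≤ psum i n (2 ^ (I - 1 - i.val)) then 1 else 0) else 0 := by
    intro B; split_ifs <;> tauto
  simp_rw [h2]
  rw [sum_ite_eq_mem]
  by_cases hc : j ≤ psum i n (2 ^ (I - 1 - i.val)) <;> by_cases hp : p ∈ K <;>
    simp [hc, hp]

end Aux3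
section Aux4
variable {I : ℕ}

lemma psum_ge (n : Finset (Fin I) → ℕ) (i : Fin I) :
    psi n i ≤ psum i n (2 ^ (I - 1 - i.val))
      + ∑ t ∈ Finset.univ.filter (fun t => t < i), psi n t := by
  classical
  set e := I - 1 - i.val with he
  set s := Finset.univ.filter (fun B : Finset (Fin I) => i ∈ B) with hs
  set high := s.filter (fun B => ∀ t ∈ B, i ≤ t) with hhigh
  set low := s.filter (fun B => ¬ ∀ t ∈ B, i ≤ t) with hlow
  have hsplit : psi n i = ∑ B ∈ high, n B + ∑ B ∈ low, n B := by
    have : psi n i = ∑ B ∈ s, n B := rfl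
    rw [this]
    exact (Finset.sum_filter_add_sum_filter_not s _ _).symm
  set enc : Finset (Fin I) → ℕ :=
    fun B => ∑ t ∈ Finset.univ.filter (fun t => i < t ∧ t ∉ B), 2 ^ (I - 1 - t.val) with henc
  have hval_inj : ∀ t t' : Fin I, i < t → i < t' → I - 1 - t.val = I - 1 - t'.val → t = t' := by
    intro t t' h1 h2 h3
    have ht := t.isLt; have ht' := t'.isLt
    rw [Fin.lt_def] at h1 h2
    apply Fin.ext; omega
  have henc_image : ∀ B, enc B = ∑ p ∈ (Finset.univ.filter
      (fun t : Fin I => i < t ∧ t ∉ B)).image (fun t : Fin I => I - 1 - t.val), 2 ^ p := by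
    intro B
    rw [Finset.sum_image]
    intro t ht t' ht' hh
    simp only [Finset.mem_coe, Finset.mem_filter] at ht ht'
    exact hval_inj t t' ht.2.1 ht'.2.1 hh
  have henc_bit : ∀ B (t : Fin I), i < t →
      (((enc B).testBit (I - 1 - t.val) = false) ↔ t ∈ B) := by
    intro B t hit
    rw [henc_image, testBit_sum_two_pow]
    simp only [decide_eq_false_iff_not, Finset.mem_image, Finset.mem_filter,
      Finset.mem_univ, true_and]
    constructor
    · intro h
      by_contra htB
      exact h ⟨t, ⟨hit, htB⟩, rfl⟩
    · rintro htB ⟨t', ⟨hit', ht'B⟩, hcoord⟩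
      exact ht'B (by rwa [hval_inj t' t hit' hit hcoord])
  have henc_lt : ∀ B, enc B < 2 ^ e := by
    intro B
    rw [henc_image]
    apply sum_two_pow_lt
    intro p hp
    simp only [Finset.mem_image, Finset.mem_filter, Finset.mem_univ, true_and] at hp
    obtain ⟨t, ⟨hit, _⟩, rfl⟩ := hp
    rw [Finset.mem_range]
    have h1 := t.isLt; have h2 := i.isLt
    rw [Fin.lt_def] at hit
    omega
  have hAset_enc : ∀ B ∈ high, Aset i (enc B) = B := by
    intro B hB
    simp only [hhigh, hs, Finset.mem_filter, Finset.mem_univ, true_and] at hB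
    obtain ⟨hiB, hall⟩ := hB
    ext t
    rw [mem_Aset]
    constructor
    · rintro (rfl | ⟨hit, hbit⟩)
      · exact hiB
      · exact (henc_bit B t hit).1 hbit
    · intro htB
      rcases eq_or_lt_of_le (hall t htB) with h | h
      · exact Or.inl h.symm
      · exact Or.inr ⟨h, (henc_bit B t h).2 htB⟩
  have hhigh_le : ∑ B ∈ high, n B ≤ psum i n (2 ^ e) := by
    have h1 : ∑ B ∈ high, n B = ∑ B ∈ high, n (Aset i (enc B)) :=
      Finset.sum_congr rfl (fun B hB => by rw [hAset_enc B hB])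
    have h2 : ∑ l ∈ high.image enc, n (Aset i l) = ∑ B ∈ high, n (Aset i (enc B)) :=
      Finset.sum_image (fun B hB B' hB' h => by
        rw [← hAset_enc B hB, ← hAset_enc B' hB', h])
    rw [h1, ← h2]
    apply Finset.sum_le_sum_of_subset
    intro l hl
    simp only [Finset.mem_image] at hl
    obtain ⟨B, _, rfl⟩ := hl
    exact Finset.mem_range.2 (henc_lt B)
  have hlow_le : ∑ B ∈ low, n B
      ≤ ∑ t ∈ Finset.univ.filter (fun t => t < i), psi n t := by
    calc ∑ B ∈ low, n B
        ≤ ∑ B ∈ low, ∑ t ∈ Finset.univ.filter (fun t => t < i),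
            (if t ∈ B then n B else 0) := by
          apply Finset.sum_le_sum
          intro B hB
          simp only [hlow, hs, Finset.mem_filter, Finset.mem_univ, true_and] at hB
          obtain ⟨hiB, hnall⟩ := hB
          push_neg at hnall
          obtain ⟨t0, ht0B, ht0i⟩ := hnall
          have hmem : t0 ∈ Finset.univ.filter (fun t => t < i) := by
            simp [ht0i]
          have hsingle := Finset.single_le_sum (f := fun t => if t ∈ B then n B else 0)
            (fun t _ => Nat.zero_le _) hmem
          simpa [ht0B] using hsingle
      _ = ∑ t ∈ Finset.univ.filter (fun t => t < i), ∑ B ∈ low,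
            (if t ∈ B then n B else 0) := Finset.sum_comm
      _ ≤ _ := by
          apply Finset.sum_le_sum
          intro t _
          rw [← Finset.sum_filter]
          have hpsi : psi n t = ∑ B ∈ Finset.univ.filter (fun B => t ∈ B), n B := rfl
          rw [hpsi]
          apply Finset.sum_le_sum_of_subset
          intro B hB
          simp only [Finset.mem_filter] at hB ⊢
          exact ⟨Finset.mem_univ _, hB.2⟩
  omega

end Aux4
section Aux5
variable {I : ℕ}

/-- Prefix-min function used to build the minimizing witness. -/
def gfun (y : Fin I → ℕ) (i : Fin I) (k : ℕ) : ℕ :=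
  min (∑ t ∈ Finset.univ.filter (fun t : Fin I => t.val < k), y t) (y i)

/-- Greedy pairing amounts. -/
def mfun (y : Fin I → ℕ) (i : Fin I) (t : Fin I) : ℕ :=
  gfun y i (t.val + 1) - gfun y i t.val

/-- The witness detailed state minimizing the enumerated partial sums. -/
def wit (y : Fin I → ℕ) (i : Fin I) : Finset (Fin I) → ℕ := fun B =>
  (if B = ({i} : Finset (Fin I)) then y i - ∑ t ∈ Finset.univ.filter (fun t => t < i), y t
    else 0)
  + ∑ t ∈ Finset.univ.filter (fun t => t < i),
      ((if B = ({t, i} : Finset (Fin I)) then mfun y i t else 0)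
        + (if B = ({t} : Finset (Fin I)) then y t - mfun y i t else 0))
  + ∑ t ∈ Finset.univ.filter (fun t => i < t),
      (if B = ({t} : Finset (Fin I)) then y t else 0)

lemma Pstep (y : Fin I → ℕ) (t : Fin I) :
    ∑ s ∈ Finset.univ.filter (fun s : Fin I => s.val < t.val + 1), y s
      = (∑ s ∈ Finset.univ.filter (fun s : Fin I => s.val < t.val), y s) + y t := by
  have hins : Finset.univ.filter (fun s : Fin I => s.val < t.val + 1)
      = insert t (Finset.univ.filter (fun s : Fin I => s.val < t.val)) := by
    ext s
    simp only [Finset.mem_filter, Finset.mem_univ, true_and, Finset.mem_insert, Fin.ext_iff]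
    omega
  rw [hins, Finset.sum_insert (by simp)]
  omega

lemma gfun_mono (y : Fin I → ℕ) (i : Fin I) (k : ℕ) : gfun y i k ≤ gfun y i (k + 1) := by
  apply min_le_min _ le_rfl
  apply Finset.sum_le_sum_of_subset
  intro s hs
  simp only [Finset.mem_filter, Finset.mem_univ, true_and] at hs ⊢
  omega

lemma mfun_le (y : Fin I → ℕ) (i : Fin I) (t : Fin I) : mfun y i t ≤ y t := by
  have h1 : gfun y i (t.val + 1) ≤ gfun y i t.val + y t := by
    unfold gfun
    rw [Pstep]
    simp only [min_def]
    split_ifs <;> omega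
  unfold mfun
  omega

lemma telescope (g : ℕ → ℕ) (hmono : ∀ k, g k ≤ g (k + 1)) (N : ℕ) :
    ∑ k ∈ Finset.range N, (g (k + 1) - g k) = g N - g 0 := by
  induction N with
  | zero => simp
  | succ N ih =>
    rw [Finset.sum_range_succ, ih]
    have h0N : g 0 ≤ g N := (monotone_nat_of_le_succ hmono) (Nat.zero_le N)
    have := hmono N
    omega

lemma sum_filter_lt_eq_range (h : ℕ → ℕ) (i : Fin I) :
    ∑ t ∈ Finset.univ.filter (fun t : Fin I => t < i), h t.val
      = ∑ k ∈ Finset.range i.val, h k := by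
  rw [Finset.sum_filter]
  have h1 : (∑ t : Fin I, if t < i then h t.val else 0)
      = ∑ t : Fin I, (fun k => if k < i.val then h k else 0) t.val := by
    apply Finset.sum_congr rfl
    intro t _
    simp only [Fin.lt_def]
  rw [h1, Fin.sum_univ_eq_sum_range (fun k => if k < i.val then h k else 0) I]
  rw [← Finset.sum_filter]
  have h2 : (Finset.range I).filter (fun k => k < i.val) = Finset.range i.val := by
    ext k
    simp only [Finset.mem_filter, Finset.mem_range]
    have := i.isLt
    omega
  rw [h2]

lemma mfun_sum (y : Fin I → ℕ) (i : Fin I) :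
    ∑ t ∈ Finset.univ.filter (fun t => t < i), mfun y i t
      = min (∑ t ∈ Finset.univ.filter (fun t => t < i), y t) (y i) := by
  have h1 : ∑ t ∈ Finset.univ.filter (fun t => t < i), mfun y i t
      = ∑ k ∈ Finset.range i.val, (gfun y i (k + 1) - gfun y i k) :=
    sum_filter_lt_eq_range (fun k => gfun y i (k + 1) - gfun y i k) i
  rw [h1, telescope _ (gfun_mono y i)]
  have hg0 : gfun y i 0 = 0 := by simp [gfun]
  have hfl : Finset.univ.filter (fun t : Fin I => t.val < i.val)
      = Finset.univ.filter (fun t => t < i) := by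
    ext t; simp only [Finset.mem_filter, Finset.mem_univ, true_and, Fin.lt_def]
  have hgi : gfun y i i.val
      = min (∑ t ∈ Finset.univ.filter (fun t => t < i), y t) (y i) := by
    unfold gfun
    rw [hfl]
  rw [hg0, hgi]
  omega

end Aux5
section Aux6
variable {I : ℕ}

lemma psi_wit (y : Fin I → ℕ) (i : Fin I) : psi (wit y i) = y := by
  funext p
  have hexp : psi (wit y i) p =
      (if p ∈ ({i} : Finset (Fin I)) then
          y i - ∑ t ∈ Finset.univ.filter (fun t => t < i), y t else 0)
      + ∑ t ∈ Finset.univ.filter (fun t => t < i),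
          ((if p ∈ ({t, i} : Finset (Fin I)) then mfun y i t else 0)
            + (if p ∈ ({t} : Finset (Fin I)) then y t - mfun y i t else 0))
      + ∑ t ∈ Finset.univ.filter (fun t => i < t),
          (if p ∈ ({t} : Finset (Fin I)) then y t else 0) := by
    show ∑ B ∈ Finset.univ.filter (fun B => p ∈ B), wit y i B = _
    unfold wit
    rw [Finset.sum_add_distrib, Finset.sum_add_distrib]
    congr 1
    · congr 1
      · exact sum_ite_eq_mem p {i} _
      · rw [Finset.sum_comm]
        refine Finset.sum_congr rfl fun t _ => ?_
        rw [Finset.sum_add_distrib, sum_ite_eq_mem, sum_ite_eq_mem]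
    · rw [Finset.sum_comm]
      refine Finset.sum_congr rfl fun t _ => ?_
      exact sum_ite_eq_mem p {t} _
  rw [hexp]
  rcases lt_trichotomy p i with hpi | rfl | hip
  · -- p < i
    have h1 : p ∉ ({i} : Finset (Fin I)) := by
      simp only [Finset.mem_singleton]; exact Fin.ne_of_lt hpi
    rw [if_neg h1]
    have h2 : ∑ t ∈ Finset.univ.filter (fun t => t < i),
        ((if p ∈ ({t, i} : Finset (Fin I)) then mfun y i t else 0)
          + (if p ∈ ({t} : Finset (Fin I)) then y t - mfun y i t else 0))
        = ∑ t ∈ Finset.univ.filter (fun t => t < i),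
            (if p = t then mfun y i t + (y t - mfun y i t) else 0) := by
      apply Finset.sum_congr rfl
      intro t ht
      simp only [Finset.mem_filter, Finset.mem_univ, true_and] at ht
      have hpne : p ≠ i := Fin.ne_of_lt hpi
      simp only [Finset.mem_insert, Finset.mem_singleton, hpne, or_false]
      split_ifs <;> omega
    rw [h2, Finset.sum_ite_eq (Finset.univ.filter (fun t => t < i)) p
      (fun t => mfun y i t + (y t - mfun y i t))]
    have hpin : p ∈ Finset.univ.filter (fun t => t < i) := by simp [hpi]
    rw [if_pos hpin]
    have h3 : ∑ t ∈ Finset.univ.filter (fun t => i < t),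
        (if p ∈ ({t} : Finset (Fin I)) then y t else 0) = 0 := by
      apply Finset.sum_eq_zero
      intro t ht
      simp only [Finset.mem_filter, Finset.mem_univ, true_and] at ht
      rw [if_neg]
      simp only [Finset.mem_singleton]
      intro h; subst h; exact absurd (lt_trans hpi ht) (lt_irrefl p)
    rw [h3]
    have := mfun_le y i p
    omega
  · -- p = i
    rw [if_pos (Finset.mem_singleton_self p)]
    have h2 : ∑ t ∈ Finset.univ.filter (fun t => t < p),
        ((if p ∈ ({t, p} : Finset (Fin I)) then mfun y p t else 0)
          + (if p ∈ ({t} : Finset (Fin I)) then y t - mfun y p t else 0))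
        = ∑ t ∈ Finset.univ.filter (fun t => t < p), mfun y p t := by
      apply Finset.sum_congr rfl
      intro t ht
      simp only [Finset.mem_filter, Finset.mem_univ, true_and] at ht
      have h21 : p ∈ ({t, p} : Finset (Fin I)) := by simp
      have h22 : p ∉ ({t} : Finset (Fin I)) := by
        simp only [Finset.mem_singleton]
        exact Fin.ne_of_gt ht
      rw [if_pos h21, if_neg h22]
      omega
    rw [h2, mfun_sum]
    have h3 : ∑ t ∈ Finset.univ.filter (fun t => p < t),
        (if p ∈ ({t} : Finset (Fin I)) then y t else 0) = 0 := by
      apply Finset.sum_eq_zero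
      intro t ht
      simp only [Finset.mem_filter, Finset.mem_univ, true_and] at ht
      rw [if_neg]
      simp only [Finset.mem_singleton]
      exact Fin.ne_of_lt ht
    rw [h3]
    rcases le_total (∑ t ∈ Finset.univ.filter (fun t => t < p), y t) (y p) with h | h
    · rw [min_eq_left h]; omega
    · rw [min_eq_right h]; omega
  · -- i < p
    have h1 : p ∉ ({i} : Finset (Fin I)) := by
      simp only [Finset.mem_singleton]; exact Fin.ne_of_gt hip
    rw [if_neg h1]
    have h2 : ∑ t ∈ Finset.univ.filter (fun t => t < i),
        ((if p ∈ ({t, i} : Finset (Fin I)) then mfun y i t else 0)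
          + (if p ∈ ({t} : Finset (Fin I)) then y t - mfun y i t else 0)) = 0 := by
      apply Finset.sum_eq_zero
      intro t ht
      simp only [Finset.mem_filter, Finset.mem_univ, true_and] at ht
      have hne1 : p ∉ ({t, i} : Finset (Fin I)) := by
        simp only [Finset.mem_insert, Finset.mem_singleton]
        push_neg
        exact ⟨Fin.ne_of_gt (lt_trans ht hip), Fin.ne_of_gt hip⟩
      have hne2 : p ∉ ({t} : Finset (Fin I)) := by
        simp only [Finset.mem_singleton]
        exact Fin.ne_of_gt (lt_trans ht hip)
      rw [if_neg hne1, if_neg hne2]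
      omega
    rw [h2]
    
    have h3 : ∑ t ∈ Finset.univ.filter (fun t => i < t),
        (if p ∈ ({t} : Finset (Fin I)) then y t else 0)
        = ∑ t ∈ Finset.univ.filter (fun t => i < t), (if p = t then y t else 0) := by
      apply Finset.sum_congr rfl
      intro t _
      simp only [Finset.mem_singleton]
    rw [h3, Finset.sum_ite_eq (Finset.univ.filter (fun t => i < t)) p y]
    have hpin : p ∈ Finset.univ.filter (fun t => i < t) := by simp [hip]
    rw [if_pos hpin]
    omega

lemma wit_mem {C : Fin I → ℕ} {y : Fin I → ℕ} (hy : y ∈ Xspace C) (i : Fin I) :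
    wit y i ∈ Nspace C := by
  constructor
  · show wit y i ∅ = 0
    unfold wit
    have e1 : ¬ (∅ : Finset (Fin I)) = ({i} : Finset (Fin I)) :=
      fun h => Finset.singleton_ne_empty i h.symm
    rw [if_neg e1]
    rw [Finset.sum_eq_zero (fun t _ => by
      rw [if_neg (fun h => Finset.insert_ne_empty t ({i} : Finset (Fin I)) h.symm),
        if_neg (fun h => Finset.singleton_ne_empty t h.symm)]; omega)]
    rw [Finset.sum_eq_zero (fun t _ => by
      rw [if_neg (fun h => Finset.singleton_ne_empty t h.symm)])]
    omega
  · intro t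
    have h : psi (wit y i) t = y t := congrFun (psi_wit y i) t
    calc (∑ A ∈ Finset.univ.filter (fun A => t ∈ A), wit y i A) = y t := h
      _ ≤ C t := hy t

lemma wit_high (y : Fin I → ℕ) (i : Fin I) {B : Finset (Fin I)}
    (hiB : i ∈ B) (hge : ∀ t ∈ B, i ≤ t) :
    wit y i B = if B = ({i} : Finset (Fin I)) then
        y i - ∑ t ∈ Finset.univ.filter (fun t => t < i), y t else 0 := by
  unfold wit
  have h2 : ∑ t ∈ Finset.univ.filter (fun t => t < i),
      ((if B = ({t, i} : Finset (Fin I)) then mfun y i t else 0)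
        + (if B = ({t} : Finset (Fin I)) then y t - mfun y i t else 0)) = 0 := by
    apply Finset.sum_eq_zero
    intro t ht
    simp only [Finset.mem_filter, Finset.mem_univ, true_and] at ht
    have hA : ¬ B = ({t, i} : Finset (Fin I)) := by
      intro h
      have htB : t ∈ B := by rw [h]; simp
      exact absurd (hge t htB) (not_le.2 ht)
    have hB : ¬ B = ({t} : Finset (Fin I)) := by
      intro h
      rw [h] at hiB
      simp only [Finset.mem_singleton] at hiB
      rw [hiB] at ht
      exact lt_irrefl t ht
    rw [if_neg hA, if_neg hB]
    omega
  have h3 : ∑ t ∈ Finset.univ.filter (fun t => i < t),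
      (if B = ({t} : Finset (Fin I)) then y t else 0) = 0 := by
    apply Finset.sum_eq_zero
    intro t ht
    simp only [Finset.mem_filter, Finset.mem_univ, true_and] at ht
    have hB : ¬ B = ({t} : Finset (Fin I)) := by
      intro h
      rw [h] at hiB
      simp only [Finset.mem_singleton] at hiB
      rw [hiB] at ht
      exact lt_irrefl t ht
    rw [if_neg hB]
  rw [h2, h3]
  omega

lemma Aset_ge (i : Fin I) (l : ℕ) : ∀ t ∈ Aset i l, i ≤ t := by
  intro t ht
  rcases mem_Aset.1 ht with rfl | ⟨h, _⟩
  · exact le_rfl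
  · exact le_of_lt h

lemma wit_Aset (y : Fin I → ℕ) (i : Fin I) {l : ℕ} (hl : l < 2 ^ (I - 1 - i.val)) :
    wit y i (Aset i l) = if l = 2 ^ (I - 1 - i.val) - 1 then
        y i - ∑ t ∈ Finset.univ.filter (fun t => t < i), y t else 0 := by
  rw [wit_high y i (i_mem_Aset i l) (Aset_ge i l)]
  by_cases h : Aset i l = ({i} : Finset (Fin I))
  · rw [if_pos h, if_pos (Aset_eq_singleton hl h)]
  · rw [if_neg h, if_neg]
    intro hl'
    subst hl'
    exact h (Aset_topk i)

lemma psum_wit (y : Fin I → ℕ) (i : Fin I) :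
    psum i (wit y i) (2 ^ (I - 1 - i.val))
      = y i - ∑ t ∈ Finset.univ.filter (fun t => t < i), y t := by
  unfold psum
  rw [Finset.sum_congr rfl (fun l hl => wit_Aset y i (Finset.mem_range.1 hl))]
  rw [Finset.sum_ite_eq' (Finset.range (2 ^ (I - 1 - i.val))) (2 ^ (I - 1 - i.val) - 1)
    (fun _ => y i - ∑ t ∈ Finset.univ.filter (fun t => t < i), y t)]
  have hpow : 1 ≤ 2 ^ (I - 1 - i.val) := Nat.one_le_two_pow
  rw [if_pos (Finset.mem_range.2 (by omega))]

lemma psum_wit_small (y : Fin I → ℕ) (i : Fin I) {k : ℕ}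
    (hk : k < 2 ^ (I - 1 - i.val) - 1) : psum i (wit y i) (k + 1) = 0 := by
  unfold psum
  apply Finset.sum_eq_zero
  intro l hl
  rw [Finset.mem_range] at hl
  rw [wit_Aset y i (by omega), if_neg (by omega)]

lemma sInf_wit (y : Fin I → ℕ) (i : Fin I) {j : ℕ} (hj : 1 ≤ j)
    (hc : j ≤ psum i (wit y i) (2 ^ (I - 1 - i.val))) :
    Aset i (sInf {k | j ≤ psum i (wit y i) (k + 1)}) = ({i} : Finset (Fin I)) := by
  have hpow : 1 ≤ 2 ^ (I - 1 - i.val) := Nat.one_le_two_pow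
  have hT : 2 ^ (I - 1 - i.val) - 1 ∈ {k | j ≤ psum i (wit y i) (k + 1)} := by
    show j ≤ psum i (wit y i) (2 ^ (I - 1 - i.val) - 1 + 1)
    rw [Nat.sub_add_cancel hpow]
    exact hc
  have hle : sInf {k | j ≤ psum i (wit y i) (k + 1)} ≤ 2 ^ (I - 1 - i.val) - 1 :=
    Nat.sInf_le hT
  have hmem : sInf {k | j ≤ psum i (wit y i) (k + 1)}
      ∈ {k | j ≤ psum i (wit y i) (k + 1)} := Nat.sInf_mem ⟨_, hT⟩
  rcases eq_or_lt_of_le hle with heq | hlt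
  · rw [heq]
    exact Aset_topk i
  · exfalso
    have h0 := psum_wit_small y i hlt
    simp only [Set.mem_setOf_eq, h0] at hmem
    omega

end Aux6

/-- Proposition 6.1: monotonicity of the supremum chain. -/
theorem stmt12 (I : ℕ) (hI : 1 ≤ I) (C : Fin I → ℕ) (hC : ∀ i, 1 ≤ C i)
    (a : Ev I) (ha : ValidEv C a)
    (x y : Fin I → ℕ) (hx : x ∈ Xspace C) (hy : y ∈ Xspace C) (hxy : x ≤ y) :
    fbar C x a ≤ fbar C y a := by
  intro p
  cases a with
  | d A =>
    have hub : fbar C x (.d A) p ≤ x p + (if p ∈ A ∧ x p < C p then 1 else 0) := by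
      simp only [fbar]
      apply csSup_le'
      rintro v ⟨n, ⟨hnN, hnx⟩, rfl⟩
      show psi (ftil C n (Ev.d A)) p ≤ _
      rw [psi_ftil_d]
      have h1 : psi n p = x p := congrFun hnx p
      rw [h1]
    have hlb : y p + (if p ∈ A ∧ y p < C p then 1 else 0) ≤ fbar C y (.d A) p := by
      simp only [fbar]
      apply le_csSup
      · refine ⟨y p + 1, ?_⟩
        rintro v ⟨n, ⟨hnN, hny⟩, rfl⟩
        show psi (ftil C n (Ev.d A)) p ≤ _
        rw [psi_ftil_d, congrFun hny p]
        split_ifs <;> omega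
      · refine ⟨sing y, ⟨sing_mem hy, psi_sing y⟩, ?_⟩
        show psi (ftil C (sing y) (Ev.d A)) p = _
        rw [psi_ftil_d, psi_sing]
    refine Nat.le_trans hub (Nat.le_trans ?_ hlb)
    have hxp : x p ≤ y p := hxy p
    have hxC := hx p
    have hyC := hy p
    by_cases hpA : p ∈ A
    · simp only [hpA, true_and]
      split_ifs <;> omega
    · have e1 : (if p ∈ A ∧ x p < C p then (1:ℕ) else 0) = 0 := if_neg (fun h => hpA h.1)
      have e2 : (if p ∈ A ∧ y p < C p then (1:ℕ) else 0) = 0 := if_neg (fun h => hpA h.1)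
      rw [e1, e2]
      omega
  | s i j =>
    obtain ⟨hj, hjC⟩ := ha
    have hSxy : ∑ t ∈ Finset.univ.filter (fun t => t < i), x t
        ≤ ∑ t ∈ Finset.univ.filter (fun t => t < i), y t :=
      Finset.sum_le_sum (fun t _ => show x t ≤ y t from hxy t)
    have hub : fbar C x (.s i j) p ≤ x p - (if j ≤ xhat x i ∧ p = i then 1 else 0) := by
      simp only [fbar]
      apply csSup_le'
      rintro v ⟨n, ⟨hnN, hnx⟩, rfl⟩
      show psi (ftil C n (Ev.s i j)) p ≤ _
      rw [psi_ftil_s C n i hj p]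
      have hpn : ∀ q, psi n q = x q := fun q => congrFun hnx q
      rw [hpn p]
      by_cases hcase : j ≤ xhat x i ∧ p = i
      · rw [if_pos hcase]
        have hcond : j ≤ psum i n (2 ^ (I - 1 - i.val)) := by
          have hge := psum_ge n i
          have hsum : ∑ t ∈ Finset.univ.filter (fun t => t < i), psi n t
              = ∑ t ∈ Finset.univ.filter (fun t => t < i), x t :=
            Finset.sum_congr rfl (fun t _ => hpn t)
          have hxi : psi n i = x i := hpn i
          have hxhat := hcase.1
          unfold xhat at hxhat
          omega
        rw [if_pos ⟨hcond, by rw [hcase.2]; exact i_mem_Aset i _⟩]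
      · rw [if_neg hcase]
        split_ifs <;> omega
    have hlb : y p - (if j ≤ xhat y i ∧ p = i then 1 else 0) ≤ fbar C y (.s i j) p := by
      simp only [fbar]
      apply le_csSup
      · refine ⟨y p, ?_⟩
        rintro v ⟨n, ⟨hnN, hny⟩, rfl⟩
        show psi (ftil C n (Ev.s i j)) p ≤ _
        rw [psi_ftil_s C n i hj p, congrFun hny p]
        exact Nat.sub_le _ _
      · refine ⟨wit y i, ⟨wit_mem hy i, psi_wit y i⟩, ?_⟩
        show psi (ftil C (wit y i) (Ev.s i j)) p = _
        rw [psi_ftil_s C (wit y i) i hj p, congrFun (psi_wit y i) p]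
        congr 1
        have hps := psum_wit y i
        by_cases hc : j ≤ psum i (wit y i) (2 ^ (I - 1 - i.val))
        · have hK := sInf_wit y i hj hc
          have hx1 : j ≤ xhat y i := by unfold xhat; omega
          rw [hK]
          by_cases hp : p = i
          · rw [if_pos ⟨hc, by rw [hp]; exact Finset.mem_singleton_self i⟩,
              if_pos ⟨hx1, hp⟩]
          · rw [if_neg (fun h => hp (Finset.mem_singleton.1 h.2)),
              if_neg (fun h => hp h.2)]
        · have hx1 : ¬ j ≤ xhat y i := by unfold xhat; omega
          rw [if_neg (fun h => hc h.1), if_neg (fun h => hx1 h.1)]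
    refine Nat.le_trans hub (Nat.le_trans ?_ hlb)
    have hxp : x p ≤ y p := hxy p
    have hxi : x i ≤ y i := hxy i
    by_cases hp : p = i
    · subst hp
      have e1 : ∀ z : Fin I → ℕ, (if j ≤ xhat z p ∧ p = p then (1:ℕ) else 0)
          = (if j ≤ xhat z p then 1 else 0) := by
        intro z
        by_cases h : j ≤ xhat z p
        · rw [if_pos ⟨h, rfl⟩, if_pos h]
        · rw [if_neg (fun hh => h hh.1), if_neg h]
      rw [e1 x, e1 y]
      unfold xhat
      split_ifs <;> omega
    · have e1 : (if j ≤ xhat x i ∧ p = i then (1:ℕ) else 0) = 0 := if_neg (fun h => hp h.2)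
      have e2 : (if j ≤ xhat y i ∧ p = i then (1:ℕ) else 0) = 0 := if_neg (fun h => hp h.2)
      rw [e1, e2]
      omega

end ATO
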